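/- Let φ ∈ ℂ and ς₁, ς₂ ∈ ℝ with min(|ς₁|, |ς₂|) ≥ |φ|. Then for all real ω, ((|φ|² - ω²)² + (2·Re(φ)·ω)²) / ((ς₁² + ω²)(ς₂² + ω²)) ≤ 1 whenever the denominator is nonzero. -/

import Mathlib

/-- For φ ∈ ℂ and ς₁, ς₂ ∈ ℝ with min(|ς₁|, |ς₂|) ≥ |φ|, for all real ω,
`((|φ|² - ω²)² + (2 Re(φ) ω)²) / ((ς₁² + ω²)(ς₂² + ω²)) ≤ 1` whenever the denominator
is nonzero. -/
theorem stmt1 (φ : ℂ) (ς₁ ς₂ ω : ℝ)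
    (h : ‖φ‖ ≤ min |ς₁| |ς₂|)
    (hden : (ς₁ ^ 2 + ω ^ 2) * (ς₂ ^ 2 + ω ^ 2) ≠ 0) :
    ((‖φ‖ ^ 2 - ω ^ 2) ^ 2 + (2 * φ.re * ω) ^ 2) /
      ((ς₁ ^ 2 + ω ^ 2) * (ς₂ ^ 2 + ω ^ 2)) ≤ 1 := by
  have habs : ‖φ‖ ^ 2 = φ.re ^ 2 + φ.im ^ 2 := by
    rw [Complex.sq_norm, Complex.normSq_apply]; ring
  have h1 : ‖φ‖ ^ 2 ≤ ς₁ ^ 2 := by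
    have := le_trans h (min_le_left _ _)
    nlinarith [norm_nonneg φ, abs_nonneg ς₁, sq_abs ς₁]
  have h2 : ‖φ‖ ^ 2 ≤ ς₂ ^ 2 := by
    have := le_trans h (min_le_right _ _)
    nlinarith [norm_nonneg φ, abs_nonneg ς₂, sq_abs ς₂]
  have hpos : 0 < (ς₁ ^ 2 + ω ^ 2) * (ς₂ ^ 2 + ω ^ 2) := by
    rcases (mul_nonneg (by positivity : (0:ℝ) ≤ ς₁ ^ 2 + ω ^ 2) (by positivity : (0:ℝ) ≤ ς₂ ^ 2 + ω ^ 2)).lt_or_eq with h' | h'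
    · exact h'
    · exact absurd h'.symm hden
  rw [div_le_one hpos]
  nlinarith [sq_nonneg (φ.im * ω), sq_nonneg ω, sq_nonneg (‖φ‖ ^ 2 + ω ^ 2),
    mul_le_mul h1 h2 (by positivity) (sq_nonneg ς₁),
    mul_nonneg (sq_nonneg ω) (sub_nonneg.2 h1), mul_nonneg (sq_nonneg ω) (sub_nonneg.2 h2)]
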